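/- (Metric Transform Rigidity) Let (X,d) be a metric space containing a rough geodesic ray, and let φ : [0,∞) → [0,∞) be an approximately nondecreasing, unbounded metric transform. If the transformed space (X,d_φ) is Gromov hyperbolic and roughly geodesic, then φ is an approximate dilation and (X,d) is Gromov hyperbolic and roughly geodesic. -/

import Mathlib

/-- `d` is a metric on `X`: it vanishes exactly on the diagonal, is symmetric,
and satisfies the triangle inequality. -/
def IsMetricOn {X : Type*} (d : X → X → ℝ) : Prop :=
  (∀ x y : X, d x y = 0 ↔ x = y) ∧ (∀ x y : X, d x y = d y x) ∧
    (∀ x y z : X, d x z ≤ d x y + d y z)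

/-- `φ : [0,∞) → [0,∞)` is a metric transform: for every metric space `(X,d)`,
`φ ∘ d` is again a metric on `X`. -/
def IsMetricTransform (φ : ℝ → ℝ) : Prop :=
  ∀ (X : Type) (d : X → X → ℝ), IsMetricOn d → IsMetricOn (fun x y => φ (d x y))

/-- The Gromov product `(x|y)_w` for a distance function `d`. -/
noncomputable def gromovProd {X : Type*} (d : X → X → ℝ) (w x y : X) : ℝ :=
  (d x w + d y w - d x y) / 2

/-- `d` is `δ`-hyperbolic: `(x|y)_w ≥ min{(x|z)_w, (y|z)_w} − δ` for all `x,y,z,w`. -/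
def IsDeltaHyp {X : Type*} (d : X → X → ℝ) (δ : ℝ) : Prop :=
  ∀ w x y z : X, min (gromovProd d w x z) (gromovProd d w y z) - δ ≤ gromovProd d w x y

/-- `d` is Gromov hyperbolic: it is `δ`-hyperbolic for some `δ ≥ 0`. -/
def IsGromovHyp {X : Type*} (d : X → X → ℝ) : Prop :=
  ∃ δ : ℝ, 0 ≤ δ ∧ IsDeltaHyp d δ

/-- `φ` is approximately nondecreasing on `[0,∞)`:
`η`-nondecreasing for some `η ≥ 0`. -/
def ApproxNondecreasing (φ : ℝ → ℝ) : Prop :=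
  ∃ η : ℝ, 0 ≤ η ∧ ∀ t s : ℝ, 0 ≤ t → t ≤ s → φ t ≤ φ s + η

/-- `φ` is unbounded on `[0,∞)`. -/
def UnboundedOnNonneg (φ : ℝ → ℝ) : Prop :=
  ∀ M : ℝ, ∃ t : ℝ, 0 ≤ t ∧ M < φ t

/-- `φ` is a `(λ,k)`-approximate dilation for some `λ > 0`, `k ≥ 0`. -/
def ApproxDilation (φ : ℝ → ℝ) : Prop :=
  ∃ lam k : ℝ, 0 < lam ∧ 0 ≤ k ∧ ∀ t : ℝ, 0 ≤ t → |φ t - lam * t| ≤ k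

/-- `φ` is logarithm-like: `t ↦ φ(2t) − φ(t)` is bounded from above on `[0,∞)`. -/
def LogarithmLike (φ : ℝ → ℝ) : Prop :=
  ∃ C : ℝ, ∀ t : ℝ, 0 ≤ t → φ (2 * t) - φ t ≤ C

/-- The distance `|x − y|_φ = φ(|x − y|)` on the half line `[0,∞)`. -/
noncomputable def halfLineDist (φ : ℝ → ℝ) (x y : {t : ℝ // 0 ≤ t}) : ℝ :=
  φ |x.1 - y.1|

/-- `(X,d)` contains a `k`-rough geodesic ray for some `k ≥ 0`. -/
def HasRoughGeodesicRay (X : Type*) (d : X → X → ℝ) : Prop :=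
  ∃ k : ℝ, 0 ≤ k ∧ ∃ γ : ℝ → X, ∀ t s : ℝ, 0 ≤ t → 0 ≤ s →
    |t - s| - k ≤ d (γ t) (γ s) ∧ d (γ t) (γ s) ≤ |t - s| + k

/-- `d` is approximately ultrametric: `δ`-ultrametric for some `δ ≥ 0`. -/
def ApproxUltrametric {X : Type*} (d : X → X → ℝ) : Prop :=
  ∃ δ : ℝ, 0 ≤ δ ∧ ∀ x y z : X, d x y ≤ max (d x z) (d z y) + δ

/-- `d` is `k`-roughly geodesic: every pair of points is joined by a `k`-rough
geodesic segment. -/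
def RoughlyGeodesicK {X : Type*} (d : X → X → ℝ) (k : ℝ) : Prop :=
  ∀ x y : X, ∃ b : ℝ, 0 ≤ b ∧ ∃ γ : ℝ → X, γ 0 = x ∧ γ b = y ∧
    ∀ t s : ℝ, t ∈ Set.Icc 0 b → s ∈ Set.Icc 0 b →
      |t - s| - k ≤ d (γ t) (γ s) ∧ d (γ t) (γ s) ≤ |t - s| + k

/-- `d` has the `k`-rough midpoint property. -/
def RoughMidpointK {X : Type*} (d : X → X → ℝ) (k : ℝ) : Prop :=
  ∀ x y : X, ∃ z : X, max (d x z) (d y z) ≤ d x y / 2 + k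

/-- `(a,b,c)` is a triangle triplet. -/
def IsTriangleTriplet (a b c : ℝ) : Prop := a ≤ b + c ∧ b ≤ a + c ∧ c ≤ a + b


private lemma mt_sub_iter {φ : ℝ → ℝ} (h0 : φ 0 = 0)
    (hsub : ∀ s t : ℝ, 0 ≤ s → 0 ≤ t → φ (s + t) ≤ φ s + φ t)
    {t : ℝ} (ht : 0 ≤ t) : ∀ n : ℕ, φ (n * t) ≤ n * φ t := by
  intro n
  induction n with
  | zero => simp [h0]
  | succ n ih =>
    have h := hsub ((n : ℝ) * t) t (by positivity) ht
    push_cast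
    have e : ((n : ℝ) + 1) * t = (n : ℝ) * t + t := by ring
    rw [e]
    push_cast at ih
    nlinarith

private lemma mt_super_iter {φ : ℝ → ℝ} {C : ℝ} (h0 : φ 0 = 0)
    (hsuper : ∀ s t : ℝ, 0 ≤ s → 0 ≤ t → φ s + φ t ≤ φ (s + t) + C)
    {t : ℝ} (ht : 0 ≤ t) : ∀ n : ℕ, (n : ℝ) * φ t - n * C ≤ φ (n * t) := by
  intro n
  induction n with
  | zero => simp [h0]
  | succ n ih =>
    have h := hsuper ((n : ℝ) * t) t (by positivity) ht
    push_cast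
    have e : ((n : ℝ) + 1) * t = (n : ℝ) * t + t := by ring
    rw [e]
    push_cast at ih
    nlinarith

private lemma mt_key {φ : ℝ → ℝ} {C η : ℝ}
    (h0 : φ 0 = 0) (hpos : ∀ t : ℝ, 0 ≤ t → 0 ≤ φ t)
    (hsub : ∀ s t : ℝ, 0 ≤ s → 0 ≤ t → φ (s + t) ≤ φ s + φ t)
    (hsuper : ∀ s t : ℝ, 0 ≤ s → 0 ≤ t → φ s + φ t ≤ φ (s + t) + C)
    (hmono : ∀ t s : ℝ, 0 ≤ t → t ≤ s → φ t ≤ φ s + η) :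
    ∀ s t : ℝ, 0 < s → 0 < t → φ s - C ≤ s / t * φ t := by
  intro s t hs ht
  have hφt : 0 ≤ φ t := hpos t ht.le
  refine le_of_forall_pos_le_add ?_
  intro ε hε
  set c : ℝ := φ t + η with hc
  set n : ℕ := ⌈c / ε⌉₊ + 1 with hn
  have hnpos : (0 : ℝ) < n := by positivity
  set m : ℕ := ⌈(n : ℝ) * s / t⌉₊ with hm
  have hm1 : (n : ℝ) * s / t ≤ m := Nat.le_ceil _
  have hm2 : (m : ℝ) < (n : ℝ) * s / t + 1 :=
    Nat.ceil_lt_add_one (by positivity)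
  have hns : (n : ℝ) * s ≤ (m : ℝ) * t := by
    rw [div_le_iff₀ ht] at hm1; linarith
  have h1 : (n : ℝ) * φ s - n * C ≤ φ ((n : ℝ) * s) := mt_super_iter h0 hsuper hs.le n
  have h2 : φ ((n : ℝ) * s) ≤ φ ((m : ℝ) * t) + η := hmono _ _ (by positivity) hns
  have h3 : φ ((m : ℝ) * t) ≤ (m : ℝ) * φ t := mt_sub_iter h0 hsub ht.le m
  have h4 : (m : ℝ) * φ t ≤ ((n : ℝ) * s / t + 1) * φ t :=
    mul_le_mul_of_nonneg_right hm2.le hφt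
  have h5 : (n : ℝ) * (φ s - C) ≤ (n : ℝ) * (s / t * φ t) + c := by
    have e : (n : ℝ) * s / t * φ t = (n : ℝ) * (s / t * φ t) := by ring
    nlinarith
  have hcn : (n : ℝ) * (c / n) = c := by field_simp
  have h6 : φ s - C ≤ s / t * φ t + c / n := by
    rw [← mul_le_mul_iff_right₀ hnpos, mul_add, hcn]; linarith
  have h7 : c / n ≤ ε := by
    have hcε : c / ε < n := by
      have h8 : (c / ε : ℝ) ≤ (⌈c / ε⌉₊ : ℝ) := Nat.le_ceil _
      have hn' : ((⌈c / ε⌉₊ : ℕ) : ℝ) + 1 = (n : ℝ) := by rw [hn]; push_cast; ring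
      linarith
    rw [div_lt_iff₀ hε] at hcε
    rw [div_le_iff₀ hnpos]
    nlinarith
  linarith

private lemma mt_dilation {φ : ℝ → ℝ} {C η : ℝ} (hC : 0 ≤ C)
    (h0 : φ 0 = 0) (hpos : ∀ t : ℝ, 0 ≤ t → 0 ≤ φ t)
    (hsub : ∀ s t : ℝ, 0 ≤ s → 0 ≤ t → φ (s + t) ≤ φ s + φ t)
    (hsuper : ∀ s t : ℝ, 0 ≤ s → 0 ≤ t → φ s + φ t ≤ φ (s + t) + C)
    (hmono : ∀ t s : ℝ, 0 ≤ t → t ≤ s → φ t ≤ φ s + η)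
    (hub : UnboundedOnNonneg φ) :
    ∃ lam : ℝ, 0 < lam ∧ ∀ t : ℝ, 0 ≤ t → |φ t - lam * t| ≤ C := by
  have key := mt_key h0 hpos hsub hsuper hmono
  set S : Set ℝ := {x | ∃ s : ℝ, 0 < s ∧ x = (φ s - C) / s} with hS
  have hne : S.Nonempty := ⟨(φ 1 - C) / 1, 1, one_pos, rfl⟩
  have hbdd : BddAbove S := by
    refine ⟨φ 1, ?_⟩
    rintro x ⟨s, hs, rfl⟩
    have hk := key s 1 hs one_pos
    rw [div_le_iff₀ hs]
    simp only [div_one] at hk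
    nlinarith
  set lam := sSup S with hlam
  have hlam_ub : ∀ t : ℝ, 0 < t → lam ≤ φ t / t := by
    intro t ht
    refine csSup_le hne ?_
    rintro x ⟨s, hs, rfl⟩
    rw [div_le_div_iff₀ hs ht]
    have hk := key s t hs ht
    have e : s / t * φ t * t = s * φ t := by field_simp
    nlinarith [mul_le_mul_of_nonneg_right hk ht.le]
  have hlam_lb : ∀ t : ℝ, 0 < t → (φ t - C) / t ≤ lam := fun t ht =>
    le_csSup hbdd ⟨t, ht, rfl⟩
  have hlampos : 0 < lam := by
    obtain ⟨s₀, hs₀, hφs₀⟩ := hub C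
    have hs0 : 0 < s₀ := by
      rcases eq_or_lt_of_le hs₀ with h | h
      · exfalso; rw [← h, h0] at hφs₀; linarith
      · exact h
    have h1 := hlam_lb s₀ hs0
    have h2 : 0 < (φ s₀ - C) / s₀ := div_pos (by linarith) hs0
    linarith
  refine ⟨lam, hlampos, fun t ht => ?_⟩
  rcases eq_or_lt_of_le ht with h | h
  · simp [← h, h0, hC]
  · rw [abs_le]
    constructor
    · have := hlam_ub t h
      rw [le_div_iff₀ h] at this
      linarith
    · have := hlam_lb t h
      rw [div_le_iff₀ h] at this
      linarith

/-- Metric Transform Rigidity. -/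
theorem stmt_2 {X : Type} [MetricSpace X]
    (hray : HasRoughGeodesicRay X (fun x y : X => dist x y))
    (φ : ℝ → ℝ)
    (hnonneg : ∀ t : ℝ, 0 ≤ t → 0 ≤ φ t)
    (hmt : IsMetricTransform φ)
    (hand : ApproxNondecreasing φ)
    (hub : UnboundedOnNonneg φ)
    (hhyp : IsGromovHyp (fun x y : X => φ (dist x y)))
    (hgeo : ∃ k : ℝ, 0 ≤ k ∧ RoughlyGeodesicK (fun x y : X => φ (dist x y)) k) :
    ApproxDilation φ ∧ IsGromovHyp (fun x y : X => dist x y) ∧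
      ∃ k : ℝ, 0 ≤ k ∧ RoughlyGeodesicK (fun x y : X => dist x y) k := by
  classical
  obtain ⟨k, hk, γ, hγ⟩ := hray
  obtain ⟨η, hη, hmono⟩ := hand
  obtain ⟨k', hk', hRG⟩ := hgeo
  -- Step 1: φ 0 = 0 and subadditivity, from the metric transform property on ℝ.
  have hRmet : IsMetricOn (fun x y : ℝ => |x - y|) := by
    refine ⟨fun x y => ?_, fun x y => abs_sub_comm x y, fun x y z => abs_sub_le x y z⟩
    simp [abs_eq_zero, sub_eq_zero]
  have hφmet := hmt ℝ _ hRmet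
  have h0 : φ 0 = 0 := by
    have := (hφmet.1 0 0).mpr rfl
    simpa using this
  have hsub : ∀ s t : ℝ, 0 ≤ s → 0 ≤ t → φ (s + t) ≤ φ s + φ t := by
    intro s t hs ht
    have h := hφmet.2.2 0 s (s + t)
    simp only at h
    have e1 : |(0 : ℝ) - (s + t)| = s + t := by
      rw [zero_sub, abs_neg, abs_of_nonneg (by linarith)]
    have e2 : |(0 : ℝ) - s| = s := by rw [zero_sub, abs_neg, abs_of_nonneg hs]
    have e3 : |s - (s + t)| = t := by
      rw [show s - (s + t) = -t by ring, abs_neg, abs_of_nonneg ht]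
    rw [e1, e2, e3] at h
    exact h
  -- Step 2: φ tends to infinity.
  obtain ⟨T, hT0, hT⟩ : ∃ T : ℝ, 0 ≤ T ∧ ∀ r : ℝ, T ≤ r → 1 + k' < φ r := by
    obtain ⟨t₀, ht₀, hφt₀⟩ := hub (1 + k' + η)
    exact ⟨t₀, ht₀, fun r hr => by have := hmono t₀ r ht₀ hr; linarith⟩
  -- Step 3: approximate superadditivity.
  set C : ℝ := φ k + φ (k + T) + 3 * η + 3 * k' with hCdef
  have hφk : (0:ℝ) ≤ φ k := hnonneg k hk
  have hkT : (0:ℝ) ≤ φ (k + T) := hnonneg (k + T) (by linarith)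
  have hC : 0 ≤ C := by rw [hCdef]; linarith
  have hsuper : ∀ s t : ℝ, 0 ≤ s → 0 ≤ t → φ s + φ t ≤ φ (s + t) + C := by
    intro s t hs ht
    by_cases hts : t ≤ k
    · have h1 : φ s ≤ φ (s + t) + η := hmono s (s + t) hs (by linarith)
      have h2 : φ t ≤ φ k + η := hmono t k ht hts
      rw [hCdef]; linarith
    · push_neg at hts
      have hxy := hγ 0 (s + t) le_rfl (by linarith)
      simp only at hxy
      have e1 : |(0 : ℝ) - (s + t)| = s + t := by
        rw [zero_sub, abs_neg, abs_of_nonneg (by linarith)]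
      rw [e1] at hxy
      obtain ⟨b, hb, γ', hγ'0, hγ'b, hg⟩ := hRG (γ 0) (γ (s + t))
      simp only at hg
      have hmem : ∀ n : ℕ, min (n : ℝ) b ∈ Set.Icc (0:ℝ) b :=
        fun n => ⟨le_min (Nat.cast_nonneg n) hb, min_le_right _ _⟩
      have h0mem : (0:ℝ) ∈ Set.Icc (0:ℝ) b := ⟨le_rfl, hb⟩
      have hbmem : b ∈ Set.Icc (0:ℝ) b := ⟨hb, le_rfl⟩
      have step : ∀ u v : ℝ, u ∈ Set.Icc (0:ℝ) b → v ∈ Set.Icc (0:ℝ) b →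
          |u - v| ≤ 1 → dist (γ' u) (γ' v) ≤ T := by
        intro u v hu hv huv
        by_contra hlt
        push_neg at hlt
        have h1 := (hg u v hu hv).2
        have h2 := hT _ hlt.le
        linarith
      set N : ℕ := ⌈b⌉₊ with hN
      have hbN : b ≤ (N : ℝ) := Nat.le_ceil b
      set f : ℕ → ℝ := fun n => dist (γ 0) (γ' (min (n : ℝ) b)) with hf
      have hfN : f N = dist (γ 0) (γ (s + t)) := by
        simp only [hf, min_eq_right hbN, hγ'b]
      have hexists : ∃ n : ℕ, s ≤ f n := by
        refine ⟨N, ?_⟩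
        rw [hfN]
        linarith [hxy.1]
      set n₀ := Nat.find hexists with hn₀
      have hfn₀ : s ≤ f n₀ := by rw [hn₀]; exact Nat.find_spec hexists
      set u₀ : ℝ := min (n₀ : ℝ) b with hu₀
      have ha_ub : f n₀ ≤ s + T := by
        rcases Nat.eq_zero_or_pos n₀ with h | h
        · have hz : f n₀ = 0 := by
            rw [h]
            show dist (γ 0) (γ' (min ((0:ℕ) : ℝ) b)) = 0
            rw [Nat.cast_zero, min_eq_left hb, hγ'0, dist_self]
          rw [hz]; linarith
        · obtain ⟨m, hm⟩ := Nat.exists_eq_succ_of_ne_zero h.ne'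
          have hfm : f m < s := by
            have h9 := Nat.find_min hexists (m := m) (by rw [← hn₀]; omega)
            exact not_le.mp h9
          have hcast : ((m + 1 : ℕ) : ℝ) = (m : ℝ) + 1 := by push_cast; ring
          have hdiff : |min ((m : ℝ) + 1) b - min ((m : ℝ)) b| ≤ 1 := by
            rcases le_total ((m : ℝ) + 1) b with h1 | h1
            · rw [min_eq_left h1, min_eq_left (by linarith)]
              rw [abs_le]; constructor <;> linarith
            · rcases le_total ((m : ℝ)) b with h2 | h2
              · rw [min_eq_right h1, min_eq_left h2]
                rw [abs_le]; constructor <;> linarith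
              · rw [min_eq_right h1, min_eq_right h2]
                simp
          have hstep := step (min ((m : ℝ)) b) (min ((m : ℝ) + 1) b)
            (hmem m)
            (by rw [← hcast]; exact hmem (m + 1))
            (by rw [abs_sub_comm]; exact hdiff)
          have htri : f (m + 1) ≤ f m +
              dist (γ' (min ((m : ℝ)) b)) (γ' (min ((m : ℝ) + 1) b)) := by
            simp only [hf, hcast]
            exact dist_triangle _ _ _
          rw [hm]
          linarith
      have hu₀mem : u₀ ∈ Set.Icc (0:ℝ) b := hmem n₀
      have hfeq : f n₀ = dist (γ 0) (γ' u₀) := rfl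
      have htri2 : dist (γ 0) (γ (s + t)) ≤ f n₀ + dist (γ' u₀) (γ (s + t)) := by
        rw [hfeq]; exact dist_triangle _ _ _
      have hφa : φ (dist (γ' 0) (γ' u₀)) ≤ |0 - u₀| + k' := (hg 0 u₀ h0mem hu₀mem).2
      have hφc : φ (dist (γ' u₀) (γ' b)) ≤ |u₀ - b| + k' := (hg u₀ b hu₀mem hbmem).2
      have hbb : b - k' ≤ φ (dist (γ' 0) (γ' b)) := by
        have h10 := (hg 0 b h0mem hbmem).1
        have e : |(0:ℝ) - b| = b := by rw [zero_sub, abs_neg, abs_of_nonneg hb]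
        rw [e] at h10
        exact h10
      have hbb' : b ≤ φ (dist (γ 0) (γ (s + t))) + k' := by
        rw [hγ'0, hγ'b] at hbb
        linarith
      have e4 : |(0:ℝ) - u₀| = u₀ := by
        rw [zero_sub, abs_neg, abs_of_nonneg hu₀mem.1]
      have e5 : |u₀ - b| = b - u₀ := by
        rw [abs_of_nonpos (by linarith [hu₀mem.2]), neg_sub]
      rw [hγ'0, e4] at hφa
      rw [hγ'b, e5] at hφc
      have hφac : φ (f n₀) + φ (dist (γ' u₀) (γ (s + t))) ≤ b + 2 * k' := by
        rw [hfeq]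
        linarith
      have hφdxy : φ (dist (γ 0) (γ (s + t))) ≤ φ (s + t) + φ k + η := by
        have h1 : φ (dist (γ 0) (γ (s + t))) ≤ φ (s + t + k) + η :=
          hmono _ (s + t + k) dist_nonneg (by linarith [hxy.2])
        have h2 : φ (s + t + k) ≤ φ (s + t) + φ k := hsub (s + t) k (by linarith) hk
        linarith
      have hφs : φ s ≤ φ (f n₀) + η := hmono s (f n₀) hs hfn₀
      have hcl : t ≤ dist (γ' u₀) (γ (s + t)) + (k + T) := by
        have := hxy.1
        linarith
      have hφt : φ t ≤ φ (dist (γ' u₀) (γ (s + t))) + φ (k + T) + η := by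
        have h1 : φ t ≤ φ (dist (γ' u₀) (γ (s + t)) + (k + T)) + η :=
          hmono t _ ht hcl
        have h2 : φ (dist (γ' u₀) (γ (s + t)) + (k + T)) ≤
            φ (dist (γ' u₀) (γ (s + t))) + φ (k + T) :=
          hsub _ (k + T) dist_nonneg (by linarith)
        linarith
      rw [hCdef]
      linarith
  -- Step 4: approximate dilation.
  obtain ⟨lam, hlam, hdil⟩ := mt_dilation hC h0 hnonneg hsub hsuper hmono hub
  have hdild : ∀ p q : X, |φ (dist p q) - lam * dist p q| ≤ C := fun p q =>
    hdil _ dist_nonneg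
  refine ⟨⟨lam, C, hlam, hC, hdil⟩, ?_, ?_⟩
  -- Step 5a: transfer of hyperbolicity.
  · obtain ⟨δ, hδ, hH⟩ := hhyp
    refine ⟨(δ + 3 * C) / lam, div_nonneg (by linarith) hlam.le, ?_⟩
    intro w x y z
    have hgp : ∀ p q : X,
        |lam * gromovProd (fun a b : X => dist a b) w p q -
          gromovProd (fun a b : X => φ (dist a b)) w p q| ≤ 3 * C / 2 := by
      intro p q
      have h1 := hdild p w
      have h2 := hdild q w
      have h3 := hdild p q
      simp only [gromovProd]
      rw [abs_le] at h1 h2 h3 ⊢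
      constructor <;> [linarith; linarith]
    have hh := hH w x y z
    have h1 := hgp x z
    have h2 := hgp y z
    have h3 := hgp x y
    rw [abs_le] at h1 h2 h3
    set A := gromovProd (fun a b : X => dist a b) w x z with hA
    set B := gromovProd (fun a b : X => dist a b) w y z with hB
    set G := gromovProd (fun a b : X => dist a b) w x y with hG
    set Aφ := gromovProd (fun a b : X => φ (dist a b)) w x z with hAφ
    set Bφ := gromovProd (fun a b : X => φ (dist a b)) w y z with hBφ
    set Gφ := gromovProd (fun a b : X => φ (dist a b)) w x y with hGφ
    have hmA : lam * min A B ≤ lam * A :=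
      mul_le_mul_of_nonneg_left (min_le_left _ _) hlam.le
    have hmB : lam * min A B ≤ lam * B :=
      mul_le_mul_of_nonneg_left (min_le_right _ _) hlam.le
    have hminle : lam * min A B - 3 * C / 2 ≤ min Aφ Bφ :=
      le_min (by linarith [h1.2]) (by linarith [h2.2])
    have hld : lam * ((δ + 3 * C) / lam) = δ + 3 * C := by field_simp
    have hfin : lam * (min A B - (δ + 3 * C) / lam) ≤ lam * G := by
      rw [mul_sub, hld]
      linarith [h3.1]
    exact (mul_le_mul_iff_right₀ hlam).mp hfin
  -- Step 5b: transfer of rough geodesicity.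
  · refine ⟨(k' + C) / lam, div_nonneg (by linarith) hlam.le, fun x y => ?_⟩
    obtain ⟨b, hb, γ', hγ'0, hγ'b, hg⟩ := hRG x y
    simp only at hg
    refine ⟨b / lam, div_nonneg hb hlam.le, fun t => γ' (lam * t), ?_, ?_, ?_⟩
    · show γ' (lam * 0) = x
      rw [mul_zero]; exact hγ'0
    · show γ' (lam * (b / lam)) = y
      rw [show lam * (b / lam) = b by field_simp]
      exact hγ'b
    · intro t s htm hsm
      have hlt : lam * t ∈ Set.Icc (0:ℝ) b :=
        ⟨mul_nonneg hlam.le htm.1, (le_div_iff₀' hlam).mp htm.2⟩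
      have hls : lam * s ∈ Set.Icc (0:ℝ) b :=
        ⟨mul_nonneg hlam.le hsm.1, (le_div_iff₀' hlam).mp hsm.2⟩
      obtain ⟨hg1, hg2⟩ := hg (lam * t) (lam * s) hlt hls
      have habs : |lam * t - lam * s| = lam * |t - s| := by
        rw [← mul_sub, abs_mul, abs_of_pos hlam]
      rw [habs] at hg1 hg2
      have hd := hdil (dist (γ' (lam * t)) (γ' (lam * s))) dist_nonneg
      rw [abs_le] at hd
      have hKl : lam * ((k' + C) / lam) = k' + C := by field_simp
      constructor
      · show |t - s| - (k' + C) / lam ≤ dist (γ' (lam * t)) (γ' (lam * s))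
        have h11 : lam * (|t - s| - (k' + C) / lam) ≤
            lam * dist (γ' (lam * t)) (γ' (lam * s)) := by
          rw [mul_sub, hKl]
          linarith [hd.2]
        exact (mul_le_mul_iff_right₀ hlam).mp h11
      · show dist (γ' (lam * t)) (γ' (lam * s)) ≤ |t - s| + (k' + C) / lam
        have h11 : lam * dist (γ' (lam * t)) (γ' (lam * s)) ≤
            lam * (|t - s| + (k' + C) / lam) := by
          rw [mul_add, hKl]
          linarith [hd.1]
        exact (mul_le_mul_iff_right₀ hlam).mp h11
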